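/- Let Q₁, …, Q_h, K₁, …, K_h, V₁, …, V_h ∈ ℝ^{d×dh}, and assume for each i that Aᵢ := Qᵢ Kᵢᵀ is symmetric and that the row space of Vᵢᵀ is contained in the row space of Aᵢ. Let x ∈ ℝ^d be a nonzero vector with Aᵢ x = 0 for every i, and let W ∈ ℝ^{N×d} be the matrix each of whose rows equals xᵀ. Then W ≠ 0 and headᵢ(X + W) = headᵢ(X) for every i and every X ∈ ℝ^{N×d}, where headᵢ(X) = rowSoftmax(X Qᵢ Kᵢᵀ Xᵀ) · (X Vᵢ). -/

import Mathlib

open Matrix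

/-- Row-wise softmax of a square matrix. -/
noncomputable def rowSoftmax {N : ℕ} (S : Matrix (Fin N) (Fin N) ℝ) :
    Matrix (Fin N) (Fin N) ℝ :=
  Matrix.of fun j k => Real.exp (S j k) / ∑ l, Real.exp (S j l)

/-- A self-attention head with query, key, value matrices `Q K V : ℝ^{d×dh}`,
applied to `X : ℝ^{N×d}`. -/
noncomputable def attnHead {d dh N : ℕ} (Q K V : Matrix (Fin d) (Fin dh) ℝ)
    (X : Matrix (Fin N) (Fin d) ℝ) : Matrix (Fin N) (Fin dh) ℝ :=
  rowSoftmax (X * Q * Kᵀ * Xᵀ) * (X * V)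

/-- The row space of a matrix: the span of its rows, i.e. the range of `x ↦ Aᵀ x`. -/
def rowSpace {m n : ℕ} (A : Matrix (Fin m) (Fin n) ℝ) : Submodule ℝ (Fin n → ℝ) :=
  LinearMap.range (Matrix.mulVecLin Aᵀ)

theorem constant_row_noise_invariant {d dh h N : ℕ} (hN : 0 < N)
    (Q K V : Fin h → Matrix (Fin d) (Fin dh) ℝ)
    (hsymm : ∀ i, (Q i * (K i)ᵀ)ᵀ = Q i * (K i)ᵀ)
    (hrows : ∀ i, rowSpace (V i)ᵀ ≤ rowSpace (Q i * (K i)ᵀ))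
    (x : Fin d → ℝ) (hx : x ≠ 0)
    (hker : ∀ i, (Q i * (K i)ᵀ).mulVec x = 0) :
    let W : Matrix (Fin N) (Fin d) ℝ := Matrix.of fun _ => x
    W ≠ 0 ∧ ∀ (i : Fin h) (X : Matrix (Fin N) (Fin d) ℝ),
      attnHead (Q i) (K i) (V i) (X + W) = attnHead (Q i) (K i) (V i) X := by
  intro W
  constructor
  · intro h0
    apply hx
    have : W ⟨0, hN⟩ = 0 := by rw [h0]; rfl
    exact this
  · intro i X
    set A := Q i * (K i)ᵀ with hA
    -- vecMul x A = 0
    have hxA : Matrix.vecMul x A = 0 := by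
      rw [← Matrix.mulVec_transpose, hsymm i, hker i]
    -- W * M facts
    have hWA : W * A = 0 := by
      ext j k
      have : (W * A) j k = Matrix.vecMul x A k := by
        simp [Matrix.mul_apply, Matrix.vecMul, dotProduct, W]
      rw [this, hxA]; rfl
    -- Vᵀ x = 0
    have hVx : Matrix.vecMul x (V i) = 0 := by
      funext k
      obtain ⟨z, hz⟩ := hrows i ⟨Pi.single k 1, rfl⟩
      have hcol : (V i).mulVec (Pi.single k 1) = fun l => V i l k := by
        funext l
        simp [Matrix.mulVec, dotProduct, Pi.single_apply]
      have : Matrix.vecMul x (V i) k = x ⬝ᵥ ((V i).mulVec (Pi.single k 1)) := by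
        rw [hcol]
        simp [Matrix.vecMul, dotProduct]
      rw [this]
      have hz' : A.mulVec z = (V i).mulVec (Pi.single k 1) := by
        have := hz
        simp only [Matrix.mulVecLin_apply, hsymm i, Matrix.transpose_transpose] at this
        exact this
      rw [← hz', dotProduct_mulVec, hxA]
      simp
    have hWV : W * V i = 0 := by
      ext j k
      have : (W * V i) j k = Matrix.vecMul x (V i) k := by
        simp [Matrix.mul_apply, Matrix.vecMul, dotProduct, W]
      rw [this, hVx]; rfl
    -- M * Wᵀ = 0 when M.mulVec x = 0
    have hXAW : (X * A) * Wᵀ = 0 := by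
      ext j k
      have h1 : ((X * A) * Wᵀ) j k = (X * A).mulVec x j := by
        simp [Matrix.mul_apply, Matrix.mulVec, dotProduct, W]
      rw [h1, ← Matrix.mulVec_mulVec, hker i]
      simp
    have hscore : (X + W) * Q i * (K i)ᵀ * (X + W)ᵀ = X * Q i * (K i)ᵀ * Xᵀ := by
      have e1 : (X + W) * Q i * (K i)ᵀ = X * A := by
        rw [Matrix.add_mul, Matrix.add_mul, Matrix.mul_assoc X, Matrix.mul_assoc W, ← hA,
          hWA, add_zero]
      rw [e1, Matrix.transpose_add, Matrix.mul_add, hXAW, add_zero, hA]; simp [Matrix.mul_assoc]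
    have hval : (X + W) * V i = X * V i := by
      rw [Matrix.add_mul, hWV, add_zero]
    unfold attnHead
    rw [hscore, hval]
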